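/- Let $a_1 \ge a_2 \ge \cdots \ge a_l \ge 0$ and $\psi \ge 0$ satisfy $\sum_{i=1}^s a_i \ge \sum_{i=s+1}^l a_i - \psi$ for some positive integer $s \le l$. Then for every real $\alpha \ge 1$, $\sum_{i=s+1}^l a_i^{\alpha} \le s \left( \left(\frac{\sum_{i=1}^s a_i^{\alpha}}{s}\right)^{1/\alpha} + \frac{\psi}{s} \right)^{\alpha}$. -/

import Mathlib

open Finset

private lemma anti_of_step {l : ℕ} {a : ℕ → ℝ}
    (hmono : ∀ i, 1 ≤ i → i < l → a (i + 1) ≤ a i) :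
    ∀ i j, 1 ≤ i → i ≤ j → j ≤ l → a j ≤ a i := by
  intro i j hi hij hjl
  induction j with
  | zero => omega
  | succ k ih =>
    rcases Nat.lt_or_ge i (k+1) with h | h
    · have hk : a (k+1) ≤ a k := hmono k (by omega) (by omega)
      exact hk.trans (ih (by omega) (by omega))
    · have : i = k + 1 := by omega
      simp [this]

/-- Lemma A.1, general part; Cai–Zhang Lemma 5.3: nonincreasing
nonnegative sequence with slack `ψ ≥ 0`: if `∑_{i=1}^s a i ≥ ∑_{i=s+1}^l a i - ψ`, then
`∑_{i=s+1}^l (a i)^α ≤ s ⬝ ( ((∑_{i=1}^s (a i)^α)/s)^{1/α} + ψ/s )^α` for real `α ≥ 1`. -/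
theorem tail_rpow_sum_le_of_slack (l s : ℕ) (hs : 1 ≤ s) (hsl : s ≤ l) (a : ℕ → ℝ)
    (ψ : ℝ) (hψ : 0 ≤ ψ)
    (hmono : ∀ i, 1 ≤ i → i < l → a (i + 1) ≤ a i)
    (hnonneg : ∀ i, 1 ≤ i → i ≤ l → 0 ≤ a i)
    (hsum : ∑ i ∈ Finset.Icc (s + 1) l, a i - ψ ≤ ∑ i ∈ Finset.Icc 1 s, a i)
    (α : ℝ) (hα : 1 ≤ α) :
    ∑ i ∈ Finset.Icc (s + 1) l, a i ^ α ≤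
      s * (((∑ i ∈ Finset.Icc 1 s, a i ^ α) / s) ^ (1 / α) + ψ / s) ^ α := by
  have hα0 : (0:ℝ) < α := lt_of_lt_of_le one_pos hα
  have hs0 : (0:ℝ) < (s:ℝ) := by exact_mod_cast hs
  have hanti := anti_of_step hmono
  set S := ∑ i ∈ Finset.Icc 1 s, a i with hS
  set Sα := ∑ i ∈ Finset.Icc 1 s, a i ^ α with hSα
  set T := ∑ i ∈ Finset.Icc (s + 1) l, a i with hT
  set m := (Sα / s) ^ (1 / α) with hm
  have hSα0 : 0 ≤ Sα := Finset.sum_nonneg (fun j hj => by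
    simp only [Finset.mem_Icc] at hj
    exact Real.rpow_nonneg (hnonneg j hj.1 (hj.2.trans hsl)) α)
  have hm0 : 0 ≤ m := Real.rpow_nonneg (by positivity) _
  -- Step A: each tail term is ≤ m
  have hA : ∀ i ∈ Finset.Icc (s+1) l, a i ≤ m := by
    intro i hi
    simp only [Finset.mem_Icc] at hi
    have hai : 0 ≤ a i := hnonneg i (by omega) hi.2
    have h1 : (s:ℝ) * a i ^ α ≤ Sα := by
      have : ∑ _j ∈ Finset.Icc 1 s, a i ^ α ≤ Sα := by
        apply Finset.sum_le_sum
        intro j hj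
        simp only [Finset.mem_Icc] at hj
        exact Real.rpow_le_rpow hai (hanti j i hj.1 (by omega) hi.2) hα0.le
      simpa [Nat.card_Icc, mul_comm] using this
    have h2 : a i ^ α ≤ Sα / s := (le_div_iff₀ hs0).mpr (by linarith [h1])
    calc a i = (a i ^ α) ^ (1/α) := by
          rw [← Real.rpow_mul hai, mul_one_div, div_self hα0.ne', Real.rpow_one]
      _ ≤ m := Real.rpow_le_rpow (Real.rpow_nonneg hai _) h2 (by positivity)
  -- Step B: tail rpow sum ≤ m^(α-1) * T
  have hB : ∑ i ∈ Finset.Icc (s + 1) l, a i ^ α ≤ m ^ (α - 1) * T := by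
    rw [hT, Finset.mul_sum]
    apply Finset.sum_le_sum
    intro i hi
    have hmem := hi
    simp only [Finset.mem_Icc] at hi
    have hai : 0 ≤ a i := hnonneg i (by omega) hi.2
    rcases eq_or_lt_of_le hai with h0 | h0
    · rw [← h0, Real.zero_rpow hα0.ne', mul_zero]
    · calc a i ^ α = a i ^ (α - 1) * a i := by
            rw [← Real.rpow_add_one h0.ne' (α-1)]; ring_nf
        _ ≤ m ^ (α - 1) * a i :=
            mul_le_mul_of_nonneg_right
              (Real.rpow_le_rpow hai (hA i hmem) (by linarith)) hai
  -- Step C: T ≤ S + ψ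
  have hC : T ≤ S + ψ := by linarith [hsum]
  -- Step D: S ≤ s * m (Jensen / power mean)
  have hD : S ≤ (s:ℝ) * m := by
    have hj := Real.arith_mean_le_rpow_mean (Finset.Icc 1 s) (fun _ => 1 / (s:ℝ)) a
      (fun i _ => by positivity)
      (by simp [Nat.card_Icc]; field_simp)
      (fun i hi => by
        simp only [Finset.mem_Icc] at hi
        exact hnonneg i hi.1 (hi.2.trans hsl)) hα
    have e1 : ∑ i ∈ Finset.Icc 1 s, 1/(s:ℝ) * a i = S / s := by
      rw [hS, ← Finset.mul_sum]; ring
    have e2 : ∑ i ∈ Finset.Icc 1 s, 1/(s:ℝ) * a i ^ α = Sα / s := by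
      rw [hSα, ← Finset.mul_sum]; ring
    rw [e1, e2] at hj
    calc S = (s:ℝ) * (S / s) := by field_simp
      _ ≤ (s:ℝ) * m := by exact mul_le_mul_of_nonneg_left hj hs0.le
  -- Combine
  have hx0 : 0 ≤ m + ψ / s := by positivity
  have key : m ^ (α - 1) * ((s:ℝ) * m + ψ) ≤ (s:ℝ) * (m + ψ/s) ^ α := by
    have hsm : (s:ℝ) * m + ψ = (s:ℝ) * (m + ψ/s) := by field_simp
    rcases eq_or_lt_of_le hx0 with h0 | h0
    · have hm' : m = 0 := by nlinarith [div_nonneg hψ hs0.le]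
      have hψ' : ψ = 0 := by
        have : ψ / s = 0 := by nlinarith [div_nonneg hψ hs0.le]
        field_simp at this; simpa using this
      simp [hm', hψ', Real.zero_rpow hα0.ne']
    · calc m ^ (α - 1) * ((s:ℝ) * m + ψ)
          ≤ (m + ψ/s) ^ (α - 1) * ((s:ℝ) * (m + ψ/s)) := by
            rw [hsm]
            apply mul_le_mul_of_nonneg_right
              (Real.rpow_le_rpow hm0 (by have := div_nonneg hψ hs0.le; linarith) (by linarith))
            positivity
        _ = (s:ℝ) * (m + ψ/s) ^ α := by
            rw [show (m + ψ/s) ^ (α-1) * ((s:ℝ) * (m + ψ/s))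
                = (s:ℝ) * ((m + ψ/s) ^ (α-1) * (m + ψ/s)) by ring,
              ← Real.rpow_add_one h0.ne' (α-1)]
            ring_nf
  have hT0 : 0 ≤ m ^ (α - 1) := Real.rpow_nonneg hm0 _
  calc ∑ i ∈ Finset.Icc (s + 1) l, a i ^ α ≤ m ^ (α - 1) * T := hB
    _ ≤ m ^ (α - 1) * ((s:ℝ) * m + ψ) := by
        apply mul_le_mul_of_nonneg_left _ hT0
        linarith
    _ ≤ (s:ℝ) * (m + ψ/s) ^ α := key
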